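/- Let 𝒟 be neighborhood closed and let Φ be a continuous periodic cocycle with period T > 0 on X (i.e. Φ(t, θ_{1,T}ω₁, ω₂, ·) = Φ(t, ω₁, ω₂, ·) for all t ≥ 0, ω₁, ω₂). Suppose Φ has a 𝒟-pullback attractor A ∈ 𝒟. Then A is periodic with period T (i.e. A(θ_{1,T}ω₁, ω₂) = A(ω₁, ω₂) for all ω₁ ∈ Ω₁, ω₂ ∈ Ω₂) if and only if Φ has a closed measurable (with respect to the P-completion of F₂) 𝒟-pullback absorbing set K ∈ 𝒟 with K periodic with period T (i.e. K(θ_{1,T}ω₁, ω₂) = K(ω₁, ω₂) for all ω₁, ω₂). -/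

import Mathlib

open Set Metric MeasureTheory Filter Topology

section RDS

variable {X : Type*} [MetricSpace X] [MeasurableSpace X] [BorelSpace X]
variable {Ω₁ : Type*} {Ω₂ : Type*} [MeasurableSpace Ω₂]

/-- `(Ω₁, θ₁)` is a parametric dynamical system. -/
def IsParamDS₁ (θ₁ : ℝ → Ω₁ → Ω₁) : Prop :=
  θ₁ 0 = id ∧ ∀ s t : ℝ, θ₁ (s + t) = θ₁ t ∘ θ₁ s

/-- `(Ω₂, F₂, P, θ₂)` is a measure-preserving parametric dynamical system. -/
def IsParamDS₂ (P : Measure Ω₂) (θ₂ : ℝ → Ω₂ → Ω₂) : Prop :=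
  Measurable (fun p : ℝ × Ω₂ => θ₂ p.1 p.2) ∧ θ₂ 0 = id ∧
    (∀ s t : ℝ, θ₂ (s + t) = θ₂ t ∘ θ₂ s) ∧ ∀ t : ℝ, MeasurePreserving (θ₂ t) P P

/-- `Φ` is a continuous cocycle on `X` over the two parametric dynamical systems. -/
def IsCocycle (θ₁ : ℝ → Ω₁ → Ω₁) (θ₂ : ℝ → Ω₂ → Ω₂)
    (Φ : ℝ → Ω₁ → Ω₂ → X → X) : Prop :=
  (∀ ω₁ : Ω₁, Measurable fun p : Ici (0:ℝ) × Ω₂ × X => Φ (p.1 : ℝ) ω₁ p.2.1 p.2.2) ∧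
  (∀ ω₁ ω₂, Φ 0 ω₁ ω₂ = id) ∧
  (∀ t τ : ℝ, 0 ≤ t → 0 ≤ τ → ∀ ω₁ ω₂,
      Φ (t + τ) ω₁ ω₂ = (Φ t (θ₁ τ ω₁) (θ₂ τ ω₂)) ∘ (Φ τ ω₁ ω₂)) ∧
  (∀ t : ℝ, 0 ≤ t → ∀ ω₁ ω₂, Continuous (Φ t ω₁ ω₂))

/-- The pullback image `Φ(t, θ₁(-t)ω₁, θ₂(-t)ω₂, B(θ₁(-t)ω₁, θ₂(-t)ω₂))`. -/
def pbImage (θ₁ : ℝ → Ω₁ → Ω₁) (θ₂ : ℝ → Ω₂ → Ω₂) (Φ : ℝ → Ω₁ → Ω₂ → X → X)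
    (B : Ω₁ → Ω₂ → Set X) (t : ℝ) (ω₁ : Ω₁) (ω₂ : Ω₂) : Set X :=
  Φ t (θ₁ (-t) ω₁) (θ₂ (-t) ω₂) '' B (θ₁ (-t) ω₁) (θ₂ (-t) ω₂)

/-- The collection `𝒟` is neighborhood closed. -/
def NbhdClosed (𝒟 : Set (Ω₁ → Ω₂ → Set X)) : Prop :=
  ∀ D ∈ 𝒟, ∃ ε > (0:ℝ), ∀ B : Ω₁ → Ω₂ → Set X,
    (∀ ω₁ ω₂, (B ω₁ ω₂).Nonempty ∧ B ω₁ ω₂ ⊆ thickening ε (D ω₁ ω₂)) → B ∈ 𝒟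

/-- `K` is a `𝒟`-pullback absorbing set for `Φ`. -/
def AbsorbsFam (θ₁ : ℝ → Ω₁ → Ω₁) (θ₂ : ℝ → Ω₂ → Ω₂) (Φ : ℝ → Ω₁ → Ω₂ → X → X)
    (𝒟 : Set (Ω₁ → Ω₂ → Set X)) (K : Ω₁ → Ω₂ → Set X) : Prop :=
  ∀ ω₁ ω₂, ∀ B ∈ 𝒟, ∃ T > (0:ℝ), ∀ t ≥ T, pbImage θ₁ θ₂ Φ B t ω₁ ω₂ ⊆ K ω₁ ω₂

/-- `K` is measurable with respect to the `P`-completion of the σ-algebra of `Ω₂`. -/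
def MeasurableFam (P : Measure Ω₂) (K : Ω₁ → Ω₂ → Set X) : Prop :=
  ∀ (x : X) (ω₁ : Ω₁), NullMeasurable (fun ω₂ => infDist x (K ω₁ ω₂)) P

/-- `Φ` is `𝒟`-pullback asymptotically compact in `X`. -/
def AsympCompact (θ₁ : ℝ → Ω₁ → Ω₁) (θ₂ : ℝ → Ω₂ → Ω₂) (Φ : ℝ → Ω₁ → Ω₂ → X → X)
    (𝒟 : Set (Ω₁ → Ω₂ → Set X)) : Prop :=
  ∀ ω₁ ω₂, ∀ B ∈ 𝒟, ∀ (t : ℕ → ℝ) (x : ℕ → X),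
    Tendsto t atTop atTop →
    (∀ n, x n ∈ B (θ₁ (-(t n)) ω₁) (θ₂ (-(t n)) ω₂)) →
    ∃ (φ : ℕ → ℕ) (y : X), StrictMono φ ∧
      Tendsto (fun n => Φ (t (φ n)) (θ₁ (-(t (φ n))) ω₁) (θ₂ (-(t (φ n))) ω₂) (x (φ n)))
        atTop (𝓝 y)

/-- `A` pullback attracts every member of `𝒟` (Hausdorff semidistance goes to `0`). -/
def AttractsFam (θ₁ : ℝ → Ω₁ → Ω₁) (θ₂ : ℝ → Ω₂ → Ω₂) (Φ : ℝ → Ω₁ → Ω₂ → X → X)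
    (𝒟 : Set (Ω₁ → Ω₂ → Set X)) (A : Ω₁ → Ω₂ → Set X) : Prop :=
  ∀ ω₁ ω₂, ∀ B ∈ 𝒟, ∀ ε > (0:ℝ), ∃ T : ℝ, ∀ t ≥ T,
    pbImage θ₁ θ₂ Φ B t ω₁ ω₂ ⊆ thickening ε (A ω₁ ω₂)

/-- `A` is a `𝒟`-pullback attractor for `Φ`. -/
def IsPullbackAttractor (P : Measure Ω₂) (θ₁ : ℝ → Ω₁ → Ω₁) (θ₂ : ℝ → Ω₂ → Ω₂)
    (Φ : ℝ → Ω₁ → Ω₂ → X → X) (𝒟 : Set (Ω₁ → Ω₂ → Set X)) (A : Ω₁ → Ω₂ → Set X) : Prop :=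
  A ∈ 𝒟 ∧ MeasurableFam P A ∧
  (∀ ω₁ ω₂, IsCompact (A ω₁ ω₂)) ∧
  (∀ t : ℝ, 0 ≤ t → ∀ ω₁ ω₂, Φ t ω₁ ω₂ '' A ω₁ ω₂ = A (θ₁ t ω₁) (θ₂ t ω₂)) ∧
  AttractsFam θ₁ θ₂ Φ 𝒟 A

/-- The Ω-limit set of a family `B`. -/
def omegaLimitFam (θ₁ : ℝ → Ω₁ → Ω₁) (θ₂ : ℝ → Ω₂ → Ω₂) (Φ : ℝ → Ω₁ → Ω₂ → X → X)
    (B : Ω₁ → Ω₂ → Set X) (ω₁ : Ω₁) (ω₂ : Ω₂) : Set X :=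
  ⋂ τ ∈ Ici (0:ℝ), closure (⋃ t ∈ Ici τ, pbImage θ₁ θ₂ Φ B t ω₁ ω₂)

/-- Auxiliary: the `infEdist` to an open thickening can be computed along a dense sequence. -/
lemma infEdist_thickening_eq_iInf {Y : Type*} [MetricSpace Y] (q : ℕ → Y)
    (hq : DenseRange q) (x : Y) (δ : ℝ) (S : Set Y) (hS : S.Nonempty) :
    infEDist x (thickening δ S) =
      ⨅ n, if infDist (q n) S < δ then edist x (q n) else ⊤ := by
  apply le_antisymm
  · refine le_iInf fun n => ?_
    by_cases h : infDist (q n) S < δ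
    · rw [if_pos h]
      exact EMetric.infEdist_le_edist_of_mem ((mem_thickening_iff_infDist_lt hS).2 h)
    · rw [if_neg h]; exact le_top
  · have hsub : thickening δ S ⊆ closure (range q ∩ thickening δ S) := by
      intro y hy
      rw [mem_closure_iff_nhds]
      intro V hV
      have hVU : V ∩ thickening δ S ∈ 𝓝 y := inter_mem hV (isOpen_thickening.mem_nhds hy)
      rcases mem_closure_iff_nhds.1 (hq y) _ hVU with ⟨z, ⟨hzV, hzU⟩, hzq⟩
      exact ⟨z, hzV, hzq, hzU⟩
    calc (⨅ n, if infDist (q n) S < δ then edist x (q n) else ⊤)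
        ≤ infEDist x (range q ∩ thickening δ S) := by
          rw [EMetric.le_infEdist]
          rintro y ⟨⟨n, rfl⟩, hyU⟩
          have h : infDist (q n) S < δ := (mem_thickening_iff_infDist_lt hS).1 hyU
          exact iInf_le_of_le n (le_of_eq (if_pos h))
      _ = infEDist x (closure (range q ∩ thickening δ S)) :=
          EMetric.infEdist_closure.symm
      _ ≤ infEDist x (thickening δ S) := EMetric.infEdist_anti hsub

/-- Proposition 2.2. Let `𝒟` be neighborhood closed and `Φ` a continuous
periodic cocycle with period `T > 0` possessing a `𝒟`-pullback attractor `A ∈ 𝒟`. Then `A` is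
periodic with period `T` if and only if `Φ` has a closed measurable `𝒟`-pullback absorbing set
`K ∈ 𝒟` which is periodic with period `T`. -/
theorem periodic_pullback_attractor_iff
    [CompleteSpace X] [TopologicalSpace.SeparableSpace X] [Nonempty Ω₁]
    (θ₁ : ℝ → Ω₁ → Ω₁) (θ₂ : ℝ → Ω₂ → Ω₂)
    (P : Measure Ω₂) [IsProbabilityMeasure P]
    (Φ : ℝ → Ω₁ → Ω₂ → X → X)
    (𝒟 : Set (Ω₁ → Ω₂ → Set X))
    (hθ₁ : IsParamDS₁ θ₁) (hθ₂ : IsParamDS₂ P θ₂)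
    (hΦ : IsCocycle θ₁ θ₂ Φ)
    (T : ℝ) (hT : 0 < T)
    (hper : ∀ t : ℝ, 0 ≤ t → ∀ ω₁ ω₂, Φ t (θ₁ T ω₁) ω₂ = Φ t ω₁ ω₂)
    (h𝒟ne : ∀ D ∈ 𝒟, ∀ ω₁ ω₂, (D ω₁ ω₂).Nonempty)
    (h𝒟 : NbhdClosed 𝒟)
    (A : Ω₁ → Ω₂ → Set X)
    (hA : IsPullbackAttractor P θ₁ θ₂ Φ 𝒟 A) :
    (∀ ω₁ ω₂, A (θ₁ T ω₁) ω₂ = A ω₁ ω₂) ↔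
      ∃ K : Ω₁ → Ω₂ → Set X, K ∈ 𝒟 ∧
        (∀ ω₁ ω₂, (K ω₁ ω₂).Nonempty ∧ IsClosed (K ω₁ ω₂)) ∧
        MeasurableFam P K ∧
        AbsorbsFam θ₁ θ₂ Φ 𝒟 K ∧
        (∀ ω₁ ω₂, K (θ₁ T ω₁) ω₂ = K ω₁ ω₂) := by
  obtain ⟨hA𝒟, hAm, hAcomp, hAinv, hAattr⟩ := hA
  -- basic group identities
  have hθ₁c : ∀ (t : ℝ) (ω : Ω₁), θ₁ t (θ₁ (-t) ω) = ω := by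
    intro t ω
    have h := congrFun (hθ₁.2 (-t) t) ω
    rw [neg_add_cancel, hθ₁.1] at h
    exact h.symm
  have hθ₂c : ∀ (t : ℝ) (ω : Ω₂), θ₂ t (θ₂ (-t) ω) = ω := by
    intro t ω
    have h := congrFun (hθ₂.2.2.1 (-t) t) ω
    rw [neg_add_cancel, hθ₂.2.1] at h
    exact h.symm
  constructor
  · -- A periodic ⟹ existence of periodic absorbing set
    intro hAper
    obtain ⟨ε, hε, hεcl⟩ := h𝒟 A hA𝒟
    set δ : ℝ := ε / 2 with hδdef
    have hδ : 0 < δ := half_pos hε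
    refine ⟨fun ω₁ ω₂ => closure (thickening δ (A ω₁ ω₂)), ?_, ?_, ?_, ?_, ?_⟩
    · refine hεcl _ fun ω₁ ω₂ => ⟨?_, ?_⟩
      · exact (h𝒟ne A hA𝒟 ω₁ ω₂).mono
          ((self_subset_thickening hδ _).trans subset_closure)
      · exact (closure_thickening_subset_cthickening δ _).trans
          (cthickening_subset_thickening' hε (half_lt_self hε) _)
    · intro ω₁ ω₂
      exact ⟨(h𝒟ne A hA𝒟 ω₁ ω₂).mono
          ((self_subset_thickening hδ _).trans subset_closure), isClosed_closure⟩
    · -- measurability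
      intro x ω₁
      have hΩ₂ : Nonempty Ω₂ := MeasureTheory.Measure.nonempty_of_neZero P
      have hX : Nonempty X := ⟨(h𝒟ne A hA𝒟 (Classical.arbitrary Ω₁)
        (Classical.arbitrary Ω₂)).choose⟩
      set q : ℕ → X := TopologicalSpace.denseSeq X with hqdef
      have hq : DenseRange q := TopologicalSpace.denseRange_denseSeq X
      have heq : (fun ω₂ => infDist x (closure (thickening δ (A ω₁ ω₂)))) =
          fun ω₂ => (⨅ n, if infDist (q n) (A ω₁ ω₂) < δ
            then edist x (q n) else ⊤).toReal := by
        funext ω₂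
        rw [infDist_closure, Metric.infDist,
          infEdist_thickening_eq_iInf q hq x δ _ (h𝒟ne A hA𝒟 ω₁ ω₂)]
      rw [heq]
      have hmeas : ∀ n : ℕ, @Measurable (NullMeasurableSpace Ω₂ P) ENNReal _ _
          (fun ω₂ => if infDist (q n) (A ω₁ ω₂) < δ then edist x (q n) else ⊤) := by
        intro n
        refine Measurable.ite ?_ measurable_const measurable_const
        exact (hAm (q n) ω₁).measurable' measurableSet_Iio
      exact ENNReal.measurable_toReal.comp (Measurable.iInf hmeas)
    · -- absorbing
      intro ω₁ ω₂ B hB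
      obtain ⟨T₁, hT₁⟩ := hAattr ω₁ ω₂ B hB δ hδ
      refine ⟨max T₁ 1, lt_of_lt_of_le zero_lt_one (le_max_right _ _), fun t ht => ?_⟩
      exact (hT₁ t (le_trans (le_max_left _ _) ht)).trans subset_closure
    · intro ω₁ ω₂
      dsimp only
      rw [hAper]
  · -- existence of periodic absorbing set ⟹ A periodic
    rintro ⟨K, hK𝒟, _hKcl, _hKm, hKabs, hKper⟩ ω₁ ω₂
    -- pullback invariance of A
    have pbA : ∀ t : ℝ, 0 ≤ t → ∀ (ω₁ : Ω₁) (ω₂ : Ω₂),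
        pbImage θ₁ θ₂ Φ A t ω₁ ω₂ = A ω₁ ω₂ := by
      intro t ht ω₁ ω₂
      unfold pbImage
      rw [hAinv t ht, hθ₁c, hθ₂c]
    -- A is contained in the pullback image of K at every time
    have subK : ∀ t : ℝ, 0 ≤ t → ∀ (ω₁ : Ω₁) (ω₂ : Ω₂),
        A ω₁ ω₂ ⊆ pbImage θ₁ θ₂ Φ K t ω₁ ω₂ := by
      intro t ht ω₁ ω₂
      obtain ⟨s, hs, habs⟩ := hKabs (θ₁ (-t) ω₁) (θ₂ (-t) ω₂) A hA𝒟
      have key := habs s le_rfl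
      have hts : (0:ℝ) ≤ t + s := add_nonneg ht hs.le
      have e1 : θ₁ s (θ₁ (-(t + s)) ω₁) = θ₁ (-t) ω₁ := by
        have h := congrFun (hθ₁.2 (-(t + s)) s) ω₁
        rw [show -(t + s) + s = -t by ring] at h
        exact h.symm
      have e2 : θ₂ s (θ₂ (-(t + s)) ω₂) = θ₂ (-t) ω₂ := by
        have h := congrFun (hθ₂.2.2.1 (-(t + s)) s) ω₂
        rw [show -(t + s) + s = -t by ring] at h
        exact h.symm
      have e3 : θ₁ (-(t + s)) ω₁ = θ₁ (-s) (θ₁ (-t) ω₁) := by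
        have h := congrFun (hθ₁.2 (-t) (-s)) ω₁
        rw [show -t + -s = -(t + s) by ring] at h
        exact h
      have e4 : θ₂ (-(t + s)) ω₂ = θ₂ (-s) (θ₂ (-t) ω₂) := by
        have h := congrFun (hθ₂.2.2.1 (-t) (-s)) ω₂
        rw [show -t + -s = -(t + s) by ring] at h
        exact h
      have hA_eq : A ω₁ ω₂ = pbImage θ₁ θ₂ Φ A (t + s) ω₁ ω₂ := (pbA (t + s) hts ω₁ ω₂).symm
      rw [hA_eq]
      have hco := hΦ.2.2.1 t s ht hs.le (θ₁ (-(t + s)) ω₁) (θ₂ (-(t + s)) ω₂)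
      unfold pbImage
      rw [hco, image_comp, e1, e2, e3, e4]
      exact image_mono key
    -- periodicity of pullback images of K
    have perK : ∀ t : ℝ, 0 ≤ t → ∀ (ω₁ : Ω₁) (ω₂ : Ω₂),
        pbImage θ₁ θ₂ Φ K t (θ₁ T ω₁) ω₂ = pbImage θ₁ θ₂ Φ K t ω₁ ω₂ := by
      intro t ht ω₁ ω₂
      have hcomm : θ₁ (-t) (θ₁ T ω₁) = θ₁ T (θ₁ (-t) ω₁) := by
        have h1 := congrFun (hθ₁.2 T (-t)) ω₁
        have h2 := congrFun (hθ₁.2 (-t) T) ω₁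
        simp only [Function.comp_apply] at h1 h2
        rw [show T + -t = -t + T by ring] at h1
        exact h1.symm.trans h2
      unfold pbImage
      rw [hcomm, hper t ht, hKper]
    -- both inclusions via attraction
    have main : ∀ (ω₁' ω₁'' : Ω₁), (∀ t : ℝ, 0 ≤ t →
          pbImage θ₁ θ₂ Φ K t ω₁'' ω₂ ⊆ pbImage θ₁ θ₂ Φ K t ω₁' ω₂) →
        A ω₁'' ω₂ ⊆ A ω₁' ω₂ := by
      intro ω₁' ω₁'' hsub x hx
      have hclosed : IsClosed (A ω₁' ω₂) := (hAcomp ω₁' ω₂).isClosed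
      rw [← hclosed.closure_eq, Metric.mem_closure_iff]
      intro ε hε
      obtain ⟨T₁, hT₁⟩ := hAattr ω₁' ω₂ K hK𝒟 ε hε
      set t : ℝ := max T₁ 0 with htdef
      have ht0 : (0:ℝ) ≤ t := le_max_right _ _
      have hxK : x ∈ pbImage θ₁ θ₂ Φ K t ω₁' ω₂ :=
        hsub t ht0 (subK t ht0 ω₁'' ω₂ hx)
      have hxth : x ∈ thickening ε (A ω₁' ω₂) := hT₁ t (le_max_left _ _) hxK
      rcases mem_thickening_iff.1 hxth with ⟨z, hz, hd⟩
      exact ⟨z, hz, hd⟩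
    refine Subset.antisymm ?_ ?_
    · exact main ω₁ (θ₁ T ω₁) fun t ht => (perK t ht ω₁ ω₂).subset
    · exact main (θ₁ T ω₁) ω₁ fun t ht => (perK t ht ω₁ ω₂).symm.subset

end RDS
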